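/- Let C be a finitely complete category with an orthogonal factorization system (L, R). Then the arrow category C^→ carries an orthogonal factorization system whose left class consists of squares (u, v) with v ∈ L, and whose right class consists of pullback squares (u, v) with v ∈ R; the factorization of a square (u, v) : f → g passes through the pullback of g along r_v, i.e., f factors as A → A' ×_{B'} Q(v) → A' over B → Q(v) → B'. -/

import Mathlib

open CategoryTheory

universe v u

/-- An orthogonal factorization system `(L, R)` on a category `C`: both classes are
closed under composition and contain all isomorphisms, every morphism factors as a
morphism in `L` followed by a morphism in `R`, and every commutative square with left
edge in `L` and right edge in `R` admits a unique diagonal filler. -/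
structure OFS (C : Type u) [Category.{v} C] where
  L : MorphismProperty C
  R : MorphismProperty C
  L_comp : ∀ {X Y Z : C} (f : X ⟶ Y) (g : Y ⟶ Z), L f → L g → L (f ≫ g)
  R_comp : ∀ {X Y Z : C} (f : X ⟶ Y) (g : Y ⟶ Z), R f → R g → R (f ≫ g)
  L_iso : ∀ {X Y : C} (f : X ⟶ Y) [IsIso f], L f
  R_iso : ∀ {X Y : C} (f : X ⟶ Y) [IsIso f], R f
  fac : ∀ {X Y : C} (f : X ⟶ Y), ∃ (Z : C) (l : X ⟶ Z) (r : Z ⟶ Y), L l ∧ R r ∧ l ≫ r = f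
  lift : ∀ {A B X Y : C} (u : A ⟶ B) (v : X ⟶ Y) (f : A ⟶ X) (g : B ⟶ Y),
    L u → R v → f ≫ v = u ≫ g → ∃! e : B ⟶ X, u ≫ e = f ∧ e ≫ v = g

/-- An orthogonal factorization system together with a choice of factorization
`f = l f ≫ r f` for every morphism `f`, with middle object (image) `im f`. -/
structure ChosenOFS (C : Type u) [Category.{v} C] extends OFS C where
  im : ∀ {X Y : C}, (X ⟶ Y) → C
  l : ∀ {X Y : C} (f : X ⟶ Y), X ⟶ im f
  r : ∀ {X Y : C} (f : X ⟶ Y), im f ⟶ Y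
  l_mem : ∀ {X Y : C} (f : X ⟶ Y), L (l f)
  r_mem : ∀ {X Y : C} (f : X ⟶ Y), R (r f)
  fac_eq : ∀ {X Y : C} (f : X ⟶ Y), l f ≫ r f = f

open CategoryTheory.Limits

/-- For a finitely complete category `C` with an OFS `(L, R)`, the arrow category
carries an OFS whose left class consists of squares with bottom component in `L` and
whose right class consists of pullback squares with bottom component in `R`; the
factorization of a square `(u, v) : f ⟶ g` passes through the pullback of `g` along
`r_v`, i.e. through the arrow `A' ×_{B'} Q(v) ⟶ Q(v)`. -/
theorem stmt18 {C : Type u} [Category.{v} C] [HasFiniteLimits C] (S : ChosenOFS C) :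
    ∃ T : OFS (Arrow C),
      (∀ {f g : Arrow C} (sq : f ⟶ g), T.L sq ↔ S.L sq.right) ∧
      (∀ {f g : Arrow C} (sq : f ⟶ g),
        T.R sq ↔ S.R sq.right ∧ IsPullback sq.left f.hom g.hom sq.right) ∧
      (∀ {f g : Arrow C} (sq : f ⟶ g),
        ∃ (a : f ⟶ Arrow.mk (pullback.snd g.hom (S.r sq.right)))
          (b : Arrow.mk (pullback.snd g.hom (S.r sq.right)) ⟶ g),
          a.right = S.l sq.right ∧
          a.left ≫ pullback.fst g.hom (S.r sq.right) = sq.left ∧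
          a.left ≫ pullback.snd g.hom (S.r sq.right) = f.hom ≫ S.l sq.right ∧
          b.left = pullback.fst g.hom (S.r sq.right) ∧
          b.right = S.r sq.right ∧ a ≫ b = sq) := by
  refine ⟨{
    L := fun {f g} sq => S.L sq.right
    R := fun {f g} sq => S.R sq.right ∧ IsPullback sq.left f.hom g.hom sq.right
    L_comp := fun {f g h} sq sq' hsq hsq' => S.L_comp _ _ hsq hsq'
    R_comp := fun {f g h} sq sq' hsq hsq' =>
      ⟨S.R_comp _ _ hsq.1 hsq'.1, hsq.2.paste_horiz hsq'.2⟩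
    L_iso := fun {f g} sq _ => by
      haveI : IsIso sq.right := inferInstanceAs (IsIso (Arrow.rightFunc.map sq))
      exact S.L_iso _
    R_iso := fun {f g} sq _ => by
      haveI : IsIso sq.right := inferInstanceAs (IsIso (Arrow.rightFunc.map sq))
      haveI : IsIso sq.left := inferInstanceAs (IsIso (Arrow.leftFunc.map sq))
      exact ⟨S.R_iso _, IsPullback.of_horiz_isIso ⟨sq.w⟩⟩
    fac := ?_
    lift := ?_ }, fun sq => Iff.rfl, fun sq => Iff.rfl, ?_⟩
  · -- factorization
    intro f g sq
    refine ⟨Arrow.mk (pullback.snd g.hom (S.r sq.right)),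
      Arrow.homMk (u := pullback.lift sq.left (f.hom ≫ S.l sq.right)
        (by rw [Category.assoc, S.fac_eq, Arrow.w sq]))
        (v := S.l sq.right) (by exact pullback.lift_snd _ _ _),
      Arrow.homMk (u := pullback.fst g.hom (S.r sq.right)) (v := S.r sq.right)
        (by simpa using pullback.condition),
      S.l_mem _, ⟨S.r_mem _, ?_⟩, ?_⟩
    · simpa using IsPullback.of_hasPullback g.hom (S.r sq.right)
    · ext
      · exact pullback.lift_fst _ _ _
      · simpa using S.fac_eq sq.right
  · -- lifting
    intro f g h k u vv a b hu ⟨hvR, hvPB⟩ w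
    have wr : a.right ≫ vv.right = u.right ≫ b.right := by
      have := congrArg CommaMorphism.right w
      simpa using this
    obtain ⟨er, ⟨her1, her2⟩, heru⟩ := S.lift u.right vv.right a.right b.right hu hvR wr
    have hbk : b.left ≫ k.hom = (g.hom ≫ er) ≫ vv.right := by
      rw [Category.assoc, her2]; exact Arrow.w b
    set el : g.left ⟶ h.left := hvPB.lift b.left (g.hom ≫ er) hbk with hel
    have hel1 : el ≫ vv.left = b.left := hvPB.lift_fst _ _ _
    have hel2 : el ≫ h.hom = g.hom ≫ er := hvPB.lift_snd _ _ _
    refine ⟨Arrow.homMk (u := el) (v := er) hel2, ⟨?_, ?_⟩, ?_⟩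
    · ext
      · show u.left ≫ el = a.left
        apply hvPB.hom_ext
        · rw [Category.assoc, hel1]
          have := congrArg CommaMorphism.left w
          simpa using this.symm
        · rw [Category.assoc, hel2, ← Category.assoc, Arrow.w u, Category.assoc, her1]
          exact (Arrow.w a).symm
      · show u.right ≫ er = a.right
        exact her1
    · ext
      · exact hel1
      · exact her2
    · rintro e' ⟨he1, he2⟩
      have er'eq : e'.right = er := by
        apply heru
        constructor
        · have := congrArg CommaMorphism.right he1; simpa using this
        · have := congrArg CommaMorphism.right he2; simpa using this
      ext
      · show e'.left = el
        apply hvPB.hom_ext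
        · rw [hel1]
          have := congrArg CommaMorphism.left he2; simpa using this
        · rw [hel2, ← er'eq]
          exact Arrow.w e'
      · exact er'eq
  · -- chosen factorization description
    intro f g sq
    refine ⟨Arrow.homMk (u := pullback.lift sq.left (f.hom ≫ S.l sq.right)
        (by rw [Category.assoc, S.fac_eq, Arrow.w sq]))
        (v := S.l sq.right) (by exact pullback.lift_snd _ _ _),
      Arrow.homMk (u := pullback.fst g.hom (S.r sq.right)) (v := S.r sq.right)
        (by simpa using pullback.condition),
      rfl, by exact pullback.lift_fst _ _ _, by exact pullback.lift_snd _ _ _, rfl, rfl, ?_⟩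
    ext
    · exact pullback.lift_fst _ _ _
    · simpa using S.fac_eq sq.right
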